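/- Let F(x,y) = (−(x − s(y))/2 + (√3/2)y, −(√3/2)(x − s(y)) − y/2). For all k,ℓ ∈ ℤ, consider the hexagon center p_{k,ℓ} = (2k+ℓ+3/2, √3(ℓ+1/2)) and set c = max(|2k+1|, 2|k+ℓ+1| − 1, |2ℓ+1|). Then F(p_{k,ℓ}) = p_{k',ℓ'} for some k',ℓ' ∈ ℤ with max(|2k'+1|, 2|k'+ℓ'+1| − 1, |2ℓ'+1|) = c (F permutes the set of hexagon centers of each level), and the minimal period of p_{k,ℓ} under F equals 3c+1. -/

import Mathlib

noncomputable def s (y : ℝ) : ℝ := if 0 ≤ y then 1 else -1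

/-- The map `F_α` of the paper for `α = 2π/3`. -/
noncomputable def F (q : ℝ × ℝ) : ℝ × ℝ :=
  (-(q.1 - s q.2) / 2 + (Real.sqrt 3 / 2) * q.2,
   -(Real.sqrt 3 / 2) * (q.1 - s q.2) - q.2 / 2)

/-- The hexagon center `p_{k,ℓ}` of the trihexagonal tiling. -/
noncomputable def pc (k ℓ : ℤ) : ℝ × ℝ :=
  (2 * (k : ℝ) + ℓ + 3/2, Real.sqrt 3 * ((ℓ : ℝ) + 1/2))

/-- The level of `p_{k,ℓ}`. -/
def lvl (k ℓ : ℤ) : ℤ := max (max (|2 * k + 1|) (2 * |k + ℓ + 1| - 1)) (|2 * ℓ + 1|)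

/-- The induced map on index pairs. -/
def G (p : ℤ × ℤ) : ℤ × ℤ :=
  (p.2, if 0 ≤ p.2 then -p.1 - p.2 - 1 else -p.1 - p.2 - 2)

lemma sqrt3_sq : Real.sqrt 3 * Real.sqrt 3 = 3 := Real.mul_self_sqrt (by norm_num)

lemma sqrt3_pos : (0:ℝ) < Real.sqrt 3 := Real.sqrt_pos.2 (by norm_num)

lemma F_pc (k ℓ : ℤ) : F (pc k ℓ) = pc (G (k, ℓ)).1 (G (k, ℓ)).2 := by
  by_cases h : 0 ≤ ℓ
  · have hy : 0 ≤ Real.sqrt 3 * ((ℓ : ℝ) + 1/2) := by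
      have h1 : (0:ℝ) ≤ (ℓ:ℝ) := by exact_mod_cast h
      positivity
    simp only [F, pc, G, s, h, if_pos hy, hy, if_true]
    rw [Prod.mk.injEq]
    constructor <;> push_cast
    · linear_combination ((ℓ:ℝ)/2 + 1/4) * sqrt3_sq
    · ring
  · have hy : ¬ (0 ≤ Real.sqrt 3 * ((ℓ : ℝ) + 1/2)) := by
      push_neg
      have h1 : (ℓ:ℝ) + 1/2 < 0 := by
        have : (ℓ:ℝ) ≤ -1 := by exact_mod_cast (by omega : ℓ ≤ -1)
        linarith
      nlinarith [sqrt3_pos]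
    simp only [F, pc, G, s, h, if_neg hy, hy, if_false]
    rw [Prod.mk.injEq]
    constructor <;> push_cast
    · linear_combination ((ℓ:ℝ)/2 + 1/4) * sqrt3_sq
    · ring

lemma pc_inj {k ℓ k' ℓ' : ℤ} (h : pc k ℓ = pc k' ℓ') : k = k' ∧ ℓ = ℓ' := by
  have h1 : (2 * (k:ℝ) + ℓ + 3/2) = 2 * (k':ℝ) + ℓ' + 3/2 := congrArg Prod.fst h
  have h2 : Real.sqrt 3 * ((ℓ:ℝ) + 1/2) = Real.sqrt 3 * ((ℓ':ℝ) + 1/2) :=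
    congrArg Prod.snd h
  have h3 : (ℓ:ℝ) = ℓ' := by
    have := mul_left_cancel₀ (ne_of_gt sqrt3_pos) h2
    linarith
  have hℓ : ℓ = ℓ' := by exact_mod_cast h3
  refine ⟨?_, hℓ⟩
  have : (k:ℝ) = k' := by rw [h3] at h1; linarith
  exact_mod_cast this

lemma lvl_G (k ℓ : ℤ) : lvl (G (k, ℓ)).1 (G (k, ℓ)).2 = lvl k ℓ := by
  simp only [G, lvl]
  by_cases h : 0 ≤ ℓ <;>
    simp only [h, if_true, if_false] <;>
    simp only [Int.abs_eq_natAbs] <;> omega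

lemma F_iter_pc (n : ℕ) (k ℓ : ℤ) :
    F^[n] (pc k ℓ) = pc (G^[n] (k, ℓ)).1 (G^[n] (k, ℓ)).2 := by
  induction n with
  | zero => simp
  | succ n ih =>
    rw [Function.iterate_succ_apply', Function.iterate_succ_apply', ih, F_pc]

/-- Parametrization of the level set of level `2m+1`. -/
def phi (m j : ℤ) : ℤ × ℤ :=
  if j % 3 = 0 then (j / 3 - m - 1, -(min (j / 3) m) - 1)
  else if j % 3 = 1 then (-(min (j / 3) m) - 1, 2 * m - max (j / 3) m)
  else (2 * m - max (j / 3) m, j / 3 - m)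

lemma phi0 (m j : ℤ) (h : j % 3 = 0) :
    phi m j = (j / 3 - m - 1, -(min (j / 3) m) - 1) := by
  simp only [phi]; rw [if_pos h]

lemma phi1 (m j : ℤ) (h : j % 3 = 1) :
    phi m j = (-(min (j / 3) m) - 1, 2 * m - max (j / 3) m) := by
  simp only [phi]; rw [if_neg (by omega), if_pos h]

lemma phi2 (m j : ℤ) (h : j % 3 = 2) :
    phi m j = (2 * m - max (j / 3) m, j / 3 - m) := by
  simp only [phi]; rw [if_neg (by omega), if_neg (by omega)]

lemma G_phi (m j : ℤ) (hm : 0 ≤ m) (h0 : 0 ≤ j) (h1 : j < 6 * m + 4) :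
    G (phi m j) = phi m ((j + 1) % (6 * m + 4)) := by
  rcases (by omega : j % 3 = 0 ∨ j % 3 = 1 ∨ j % 3 = 2) with h | h | h
  · rcases (by omega : j = 6 * m + 3 ∨ j < 6 * m + 3) with hj | hj
    · -- wrap around
      have e2 : (j + 1) % (6 * m + 4) = 0 := by
        rw [show j + 1 = 6 * m + 4 from by omega]; exact Int.emod_self
      rw [e2, phi0 m j h, phi0 m 0 (by norm_num)]
      have e1 : j / 3 = 2 * m + 1 := by omega
      simp only [G]
      rw [if_neg (by omega : ¬ (0:ℤ) ≤ -(min (j / 3) m) - 1)]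
      rw [Prod.mk.injEq]
      constructor <;> omega
    · have e2 : (j + 1) % (6 * m + 4) = j + 1 := Int.emod_eq_of_lt (by omega) (by omega)
      rw [e2, phi0 m j h, phi1 m (j + 1) (by omega)]
      simp only [G]
      rw [if_neg (by omega : ¬ (0:ℤ) ≤ -(min (j / 3) m) - 1)]
      rw [Prod.mk.injEq]
      constructor <;> omega
  · have e2 : (j + 1) % (6 * m + 4) = j + 1 := Int.emod_eq_of_lt (by omega) (by omega)
    rw [e2, phi1 m j h, phi2 m (j + 1) (by omega)]
    simp only [G]
    rw [if_pos (by omega : (0:ℤ) ≤ 2 * m - max (j / 3) m)]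
    rw [Prod.mk.injEq]
    constructor <;> omega
  · have e2 : (j + 1) % (6 * m + 4) = j + 1 := Int.emod_eq_of_lt (by omega) (by omega)
    rw [e2, phi2 m j h, phi0 m (j + 1) (by omega)]
    simp only [G]
    by_cases hc : (0:ℤ) ≤ j / 3 - m
    · rw [if_pos hc, Prod.mk.injEq]
      constructor <;> omega
    · rw [if_neg hc, Prod.mk.injEq]
      constructor <;> omega

lemma G_iter_phi (m : ℤ) (hm : 0 ≤ m) (n : ℕ) (j : ℤ) (h0 : 0 ≤ j) (h1 : j < 6 * m + 4) :
    G^[n] (phi m j) = phi m ((j + n) % (6 * m + 4)) := by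
  induction n with
  | zero =>
    simp only [Function.iterate_zero, id_eq, Nat.cast_zero, add_zero]
    rw [Int.emod_eq_of_lt h0 h1]
  | succ n ih =>
    rw [Function.iterate_succ_apply', ih]
    have hN : (0:ℤ) < 6 * m + 4 := by omega
    have h0' : 0 ≤ (j + n) % (6 * m + 4) := Int.emod_nonneg _ (by omega)
    have h1' : (j + n) % (6 * m + 4) < 6 * m + 4 := Int.emod_lt_of_pos _ hN
    rw [G_phi m _ hm h0' h1']
    congr 1
    rw [Int.emod_add_emod]
    push_cast
    ring_nf

lemma phi_inj (m : ℤ) (hm : 0 ≤ m) {j j' : ℤ} (h0 : 0 ≤ j) (h1 : j < 6 * m + 4)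
    (h0' : 0 ≤ j') (h1' : j' < 6 * m + 4) (h : phi m j = phi m j') : j = j' := by
  rcases (by omega : j % 3 = 0 ∨ j % 3 = 1 ∨ j % 3 = 2) with ha | ha | ha <;>
  rcases (by omega : j' % 3 = 0 ∨ j' % 3 = 1 ∨ j' % 3 = 2) with hb | hb | hb <;>
  [rw [phi0 m j ha, phi0 m j' hb] at h; rw [phi0 m j ha, phi1 m j' hb] at h;
   rw [phi0 m j ha, phi2 m j' hb] at h; rw [phi1 m j ha, phi0 m j' hb] at h;
   rw [phi1 m j ha, phi1 m j' hb] at h; rw [phi1 m j ha, phi2 m j' hb] at h;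
   rw [phi2 m j ha, phi0 m j' hb] at h; rw [phi2 m j ha, phi1 m j' hb] at h;
   rw [phi2 m j ha, phi2 m j' hb] at h] <;>
  rw [Prod.mk.injEq] at h <;> omega

lemma exists_j (m k ℓ : ℤ) (hm : 0 ≤ m) (h : lvl k ℓ = 2 * m + 1) :
    ∃ j : ℤ, 0 ≤ j ∧ j < 6 * m + 4 ∧ phi m j = (k, ℓ) := by
  simp only [lvl, Int.abs_eq_natAbs] at h
  rcases (by omega :
      (k + ℓ = -m - 2 ∧ -m - 1 ≤ k ∧ k ≤ -1) ∨
      (ℓ = -m - 1 ∧ -1 ≤ k ∧ k ≤ m) ∨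
      (ℓ = m ∧ -m - 1 ≤ k ∧ k ≤ -1) ∨
      (k = -m - 1 ∧ 0 ≤ ℓ ∧ ℓ ≤ m) ∨
      (k = m ∧ -m ≤ ℓ ∧ ℓ ≤ 0) ∨
      (k + ℓ = m ∧ 0 ≤ ℓ ∧ ℓ ≤ m)) with hc | hc | hc | hc | hc | hc
  · refine ⟨3 * (k + m + 1), by omega, by omega, ?_⟩
    rw [phi0 m _ (by omega), Prod.mk.injEq]
    constructor <;> omega
  · refine ⟨3 * (k + m + 1), by omega, by omega, ?_⟩
    rw [phi0 m _ (by omega), Prod.mk.injEq]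
    constructor <;> omega
  · refine ⟨3 * (-k - 1) + 1, by omega, by omega, ?_⟩
    rw [phi1 m _ (by omega), Prod.mk.injEq]
    constructor <;> omega
  · refine ⟨3 * (2 * m - ℓ) + 1, by omega, by omega, ?_⟩
    rw [phi1 m _ (by omega), Prod.mk.injEq]
    constructor <;> omega
  · refine ⟨3 * (ℓ + m) + 2, by omega, by omega, ?_⟩
    rw [phi2 m _ (by omega), Prod.mk.injEq]
    constructor <;> omega
  · refine ⟨3 * (ℓ + m) + 2, by omega, by omega, ?_⟩
    rw [phi2 m _ (by omega), Prod.mk.injEq]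
    constructor <;> omega

/-- `F` permutes the hexagon centers of each level, and each hexagon center
with level `c` has minimal period `3c+1` under `F`. -/
theorem hexagon_centers_dynamics_two_pi_div_three (k ℓ : ℤ) :
    (∃ k' ℓ' : ℤ, F (pc k ℓ) = pc k' ℓ' ∧ lvl k' ℓ' = lvl k ℓ) ∧
    (Function.minimalPeriod F (pc k ℓ) : ℤ) = 3 * lvl k ℓ + 1 := by
  refine ⟨⟨(G (k, ℓ)).1, (G (k, ℓ)).2, F_pc k ℓ, lvl_G k ℓ⟩, ?_⟩
  obtain ⟨m, hm, hc⟩ : ∃ m : ℤ, 0 ≤ m ∧ lvl k ℓ = 2 * m + 1 := by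
    refine ⟨(lvl k ℓ - 1) / 2, ?_, ?_⟩ <;>
      (simp only [lvl, Int.abs_eq_natAbs]; omega)
  obtain ⟨j, hj0, hj1, hjphi⟩ := exists_j m k ℓ hm hc
  set N : ℕ := (6 * m + 4).toNat with hNdef
  have hNZ : (N : ℤ) = 6 * m + 4 := Int.toNat_of_nonneg (by omega)
  have hNpos : 0 < N := by omega
  have hGiter : ∀ n : ℕ, G^[n] (k, ℓ) = phi m ((j + n) % (6 * m + 4)) := by
    intro n
    rw [← hjphi]
    exact G_iter_phi m hm n j hj0 hj1
  have hper : Function.IsPeriodicPt F N (pc k ℓ) := by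
    show F^[N] (pc k ℓ) = pc k ℓ
    rw [F_iter_pc, hGiter N, hNZ]
    have he : (j + (6 * m + 4)) % (6 * m + 4) = j := by
      rw [show j + (6 * m + 4) = j + (6 * m + 4) * 1 from by ring,
        Int.add_mul_emod_self_left]
      exact Int.emod_eq_of_lt hj0 hj1
    rw [he, hjphi]
  have hp0 : 0 < Function.minimalPeriod F (pc k ℓ) := hper.minimalPeriod_pos hNpos
  have hple : Function.minimalPeriod F (pc k ℓ) ≤ N := hper.minimalPeriod_le hNpos
  set p := Function.minimalPeriod F (pc k ℓ) with hpdef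
  have hpper : F^[p] (pc k ℓ) = pc k ℓ := Function.iterate_minimalPeriod
  rw [F_iter_pc, hGiter p] at hpper
  have hA : phi m ((j + p) % (6 * m + 4)) = phi m j := by
    rw [hjphi]
    have hx : pc (phi m ((j + ↑p) % (6 * m + 4))).1 (phi m ((j + ↑p) % (6 * m + 4))).2
        = pc k ℓ := hpper
    obtain ⟨ha, hb⟩ := pc_inj hx
    exact Prod.ext ha hb
  have h0' : 0 ≤ (j + p) % (6 * m + 4) := Int.emod_nonneg _ (by omega)
  have h1' : (j + p) % (6 * m + 4) < 6 * m + 4 := Int.emod_lt_of_pos _ (by omega)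
  have heq : (j + p) % (6 * m + 4) = j := phi_inj m hm h0' h1' hj0 hj1 hA
  have hmod : Int.ModEq (6 * m + 4) j (j + p) := by
    show j % (6 * m + 4) = (j + p) % (6 * m + 4)
    rw [heq, Int.emod_eq_of_lt hj0 hj1]
  have hdvd : (6 * m + 4) ∣ (p : ℤ) := by
    have := hmod.dvd
    have he : j + (p:ℤ) - j = (p:ℤ) := by ring
    rwa [he] at this
  have hdvdN : N ∣ p := by
    have : (N : ℤ) ∣ (p : ℤ) := by rw [hNZ]; exact hdvd
    exact_mod_cast this
  have hNp : N ≤ p := Nat.le_of_dvd hp0 hdvdN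
  have hpN : p = N := le_antisymm hple hNp
  rw [hpN, hNZ, hc]
  ring
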